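/- For complex numbers y, z with |y| < 1, |z| < 1: ∑ over pairs (a,b) with a ≥ 0, b ≥ 1, gcd(a,b) = 1 of (1/b)·log(1 − y^a z^b) equals (1/(1−y))·log(1−z). -/

import Mathlib

open Complex

private noncomputable abbrev vpvH (y z : ℂ) : ℕ × ℕ → ℂ :=
  fun q => y ^ q.1 * (-(z ^ q.2 / (q.2 : ℂ)))

/-- The reindexing bijection `((a,b),m) ↦ (a*m, b*m)`. -/
private def vpvE :
    ({p : ℕ × ℕ // 0 < p.2 ∧ Nat.gcd p.1 p.2 = 1} × {m : ℕ // 0 < m}) ≃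
      {q : ℕ × ℕ // 0 < q.2} where
  toFun x := ⟨(x.1.1.1 * x.2.1, x.1.1.2 * x.2.1), Nat.mul_pos x.1.2.1 x.2.2⟩
  invFun q :=
    ⟨⟨(q.1.1 / Nat.gcd q.1.1 q.1.2, q.1.2 / Nat.gcd q.1.1 q.1.2),
      Nat.div_pos (Nat.le_of_dvd q.2 (Nat.gcd_dvd_right _ _))
        (Nat.gcd_pos_of_pos_right _ q.2),
      Nat.coprime_div_gcd_div_gcd (Nat.gcd_pos_of_pos_right _ q.2)⟩,
     ⟨Nat.gcd q.1.1 q.1.2, Nat.gcd_pos_of_pos_right _ q.2⟩⟩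
  left_inv := by
    rintro ⟨⟨⟨a, b⟩, hb, hab⟩, ⟨m, hm⟩⟩
    have hg : Nat.gcd (a * m) (b * m) = m := by
      rw [Nat.gcd_mul_right, hab, one_mul]
    simp only [Subtype.mk.injEq, Prod.mk.injEq, hg]
    exact ⟨⟨Nat.mul_div_cancel _ hm, Nat.mul_div_cancel _ hm⟩, trivial⟩
  right_inv := by
    rintro ⟨⟨A, B⟩, hB⟩
    simp only [Subtype.mk.injEq, Prod.mk.injEq]
    exact ⟨Nat.div_mul_cancel (Nat.gcd_dvd_left _ _),
      Nat.div_mul_cancel (Nat.gcd_dvd_right _ _)⟩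

set_option maxHeartbeats 1000000 in
theorem vpv_half_plane_log_identity (y z : ℂ) (hy : ‖y‖ < 1)
    (hz : ‖z‖ < 1) :
    ∑' p : {p : ℕ × ℕ // 0 < p.2 ∧ Nat.gcd p.1 p.2 = 1},
        (1 / ((p : ℕ × ℕ).2 : ℂ)) * Complex.log (1 - y ^ (p : ℕ × ℕ).1 * z ^ (p : ℕ × ℕ).2) =
      (1 / (1 - y)) * Complex.log (1 - z) := by
  have hy' : ‖y‖ < 1 := by exact hy
  have hz' : ‖z‖ < 1 := by exact hz
  -- geometric series for 1/(1-y)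
  have hA : HasSum (fun A : ℕ => y ^ A) (1 - y)⁻¹ :=
    hasSum_geometric_of_norm_lt_one hy'
  -- log series for log(1-z)
  have hB : HasSum (fun B : ℕ => -(z ^ B / (B : ℂ))) (Complex.log (1 - z)) := by
    simpa using (Complex.hasSum_taylorSeries_neg_log hz').neg
  -- summability of the double series over ℕ × ℕ
  have sB : Summable (fun B : ℕ => ‖z‖ ^ B / (B : ℝ)) := by
    refine Summable.of_nonneg_of_le (fun B => by positivity) (fun B => ?_)
      (summable_geometric_of_lt_one (norm_nonneg z) hz')
    rcases Nat.eq_zero_or_pos B with rfl | hBpos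
    · simp
    · exact div_le_self (by positivity) (by exact_mod_cast hBpos)
  have hsum_norm : Summable (fun q : ℕ × ℕ => ‖y‖ ^ q.1 * (‖z‖ ^ q.2 / (q.2 : ℝ))) :=
    (summable_geometric_of_lt_one (norm_nonneg y) hy').mul_of_nonneg sB
      (fun A => by positivity) (fun B => by positivity)
  have hsummable : Summable (vpvH y z) := by
    refine Summable.of_norm (Summable.of_nonneg_of_le (fun q => norm_nonneg _)
      (fun q => le_of_eq ?_) hsum_norm)
    simp [vpvH, norm_mul, norm_div, norm_pow, Complex.norm_natCast]
  -- total sum of H over ℕ × ℕ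
  have hH : HasSum (vpvH y z) ((1 - y)⁻¹ * Complex.log (1 - z)) := by
    have := HasSum.mul hA hB (by exact hsummable)
    exact this
  -- restrict to the support {q | 0 < q.2}
  have hsupp : Function.support (vpvH y z) ⊆ {q : ℕ × ℕ | 0 < q.2} := by
    intro q hq
    rcases Nat.eq_zero_or_pos q.2 with h0 | hpos
    · exfalso; apply hq; simp [vpvH, h0]
    · exact hpos
  have hT : HasSum (fun q : {q : ℕ × ℕ // 0 < q.2} => vpvH y z q)
      ((1 - y)⁻¹ * Complex.log (1 - z)) :=
    (hasSum_subtype_iff_of_support_subset hsupp).mpr hH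
  -- pull back along the bijection
  have hE : HasSum (fun x : {p : ℕ × ℕ // 0 < p.2 ∧ Nat.gcd p.1 p.2 = 1} × {m : ℕ // 0 < m} =>
      vpvH y z (vpvE x)) ((1 - y)⁻¹ * Complex.log (1 - z)) :=
    (vpvE.hasSum_iff).mpr hT
  -- fiberwise sums: for each coprime pair, sum over m gives (1/b) log(1 - y^a z^b)
  have hfiber : ∀ p : {p : ℕ × ℕ // 0 < p.2 ∧ Nat.gcd p.1 p.2 = 1},
      HasSum (fun m : {m : ℕ // 0 < m} => vpvH y z (vpvE (p, m)))
        ((1 / ((p : ℕ × ℕ).2 : ℂ)) * Complex.log (1 - y ^ (p : ℕ × ℕ).1 * z ^ (p : ℕ × ℕ).2)) := by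
    rintro ⟨⟨a, b⟩, hb, hab⟩
    have hw : ‖y ^ a * z ^ b‖ < 1 := by
      rw [norm_mul, norm_pow, norm_pow]
      calc ‖y‖ ^ a * ‖z‖ ^ b ≤ 1 * ‖z‖ ^ b := by
            exact mul_le_mul_of_nonneg_right
              (pow_le_one₀ (norm_nonneg y) hy'.le) (by positivity)
        _ = ‖z‖ ^ b := one_mul _
        _ ≤ ‖z‖ ^ 1 := pow_le_pow_of_le_one (norm_nonneg z) hz'.le hb
        _ < 1 := by simpa using hz'
    have htay : HasSum (fun m : ℕ => -(1 / (b : ℂ)) * ((y ^ a * z ^ b) ^ m / (m : ℂ)))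
        (-(1 / (b : ℂ)) * -Complex.log (1 - y ^ a * z ^ b)) :=
      (Complex.hasSum_taylorSeries_neg_log hw).mul_left _
    have hsupp' : Function.support
        (fun m : ℕ => -(1 / (b : ℂ)) * ((y ^ a * z ^ b) ^ m / (m : ℂ))) ⊆ {m : ℕ | 0 < m} := by
      intro m hm
      rcases Nat.eq_zero_or_pos m with rfl | hpos
      · exfalso; apply hm; simp
      · exact hpos
    have hres : HasSum (fun m : {m : ℕ // 0 < m} =>
        -(1 / (b : ℂ)) * ((y ^ a * z ^ b) ^ (m : ℕ) / ((m : ℕ) : ℂ)))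
        (-(1 / (b : ℂ)) * -Complex.log (1 - y ^ a * z ^ b)) :=
      (hasSum_subtype_iff_of_support_subset hsupp').mpr htay
    have heq : (fun m : {m : ℕ // 0 < m} => vpvH y z (vpvE (⟨⟨a, b⟩, hb, hab⟩, m)))
        = fun m : {m : ℕ // 0 < m} =>
            -(1 / (b : ℂ)) * ((y ^ a * z ^ b) ^ (m : ℕ) / ((m : ℕ) : ℂ)) := by
      funext ⟨m, hm⟩
      have hbc : ((b : ℂ)) ≠ 0 := Nat.cast_ne_zero.mpr hb.ne'
      have hmc : ((m : ℂ)) ≠ 0 := Nat.cast_ne_zero.mpr hm.ne'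
      simp only [vpvH, vpvE, Equiv.coe_fn_mk]
      rw [mul_pow, ← pow_mul, ← pow_mul]
      push_cast
      field_simp
    rw [heq]
    convert hres using 1
    ring
  have final := HasSum.prod_fiberwise hE hfiber
  rw [final.tsum_eq, one_div]
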